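/- (Faithfulness) For any formula A of the language L of intuitionistic predicate logic with free variables x₁, …, xₙ: if A is provable in IQC, then ∀x₁ ⋯ ∀xₙ A^t is provable in Q∘S4.t. -/

import Mathlib

/-! ## Propositional intuitionistic formulas and IPC -/

inductive PropForm : Type
  | var : ℕ → PropForm
  | falsum : PropForm
  | and : PropForm → PropForm → PropForm
  | or : PropForm → PropForm → PropForm
  | impl : PropForm → PropForm → PropForm

/-- Hilbert-style intuitionistic propositional calculus. -/
inductive IPC : PropForm → Prop
  | ax1 (A B : PropForm) : IPC (A.impl (B.impl A))
  | ax2 (A B C : PropForm) : IPC ((A.impl (B.impl C)).impl ((A.impl B).impl (A.impl C)))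
  | andE1 (A B : PropForm) : IPC ((A.and B).impl A)
  | andE2 (A B : PropForm) : IPC ((A.and B).impl B)
  | andI (A B : PropForm) : IPC (A.impl (B.impl (A.and B)))
  | orI1 (A B : PropForm) : IPC (A.impl (A.or B))
  | orI2 (A B : PropForm) : IPC (B.impl (A.or B))
  | orE (A B C : PropForm) : IPC ((A.impl C).impl ((B.impl C).impl ((A.or B).impl C)))
  | exfalso (A : PropForm) : IPC (PropForm.falsum.impl A)
  | mp (A B : PropForm) : IPC (A.impl B) → IPC A → IPC B

/-! ## Bimodal propositional formulas and S4.t -/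

inductive BForm : Type
  | var : ℕ → BForm
  | falsum : BForm
  | impl : BForm → BForm → BForm
  | boxF : BForm → BForm
  | boxP : BForm → BForm

def BForm.neg (A : BForm) : BForm := A.impl .falsum
def BForm.diaF (A : BForm) : BForm := (A.neg.boxF).neg
def BForm.diaP (A : BForm) : BForm := (A.neg.boxP).neg

/-- The tense propositional logic S4.t: classical propositional logic, S4 axioms
for both `boxF` and `boxP`, the two tense axioms, MP and both necessitations. -/
inductive S4t : BForm → Prop
  | ax1 (A B : BForm) : S4t (A.impl (B.impl A))
  | ax2 (A B C : BForm) : S4t ((A.impl (B.impl C)).impl ((A.impl B).impl (A.impl C)))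
  | ax3 (A B : BForm) : S4t (((B.neg).impl (A.neg)).impl (A.impl B))
  | kF (A B : BForm) : S4t ((A.impl B).boxF.impl (A.boxF.impl B.boxF))
  | tF (A : BForm) : S4t (A.boxF.impl A)
  | fourF (A : BForm) : S4t (A.boxF.impl A.boxF.boxF)
  | kP (A B : BForm) : S4t ((A.impl B).boxP.impl (A.boxP.impl B.boxP))
  | tP (A : BForm) : S4t (A.boxP.impl A)
  | fourP (A : BForm) : S4t (A.boxP.impl A.boxP.boxP)
  | tense1 (A : BForm) : S4t (A.impl A.diaF.boxP)
  | tense2 (A : BForm) : S4t (A.impl A.diaP.boxF)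
  | mp (A B : BForm) : S4t (A.impl B) → S4t A → S4t B
  | necF (A : BForm) : S4t A → S4t A.boxF
  | necP (A : BForm) : S4t A → S4t A.boxP

/-! ## Predicate tense formulas (the language L_T) -/

/-- Formulas of the bimodal predicate language `L_T`.  The classical basis means
that `⊥, →, ∀, □F, □P` are primitive; the remaining connectives are the usual
classical abbreviations, defined below. -/
inductive TForm : Type
  | falsum : TForm
  | atom : ℕ → List ℕ → TForm
  | impl : TForm → TForm → TForm
  | all : ℕ → TForm → TForm
  | boxF : TForm → TForm
  | boxP : TForm → TForm

def TForm.neg (A : TForm) : TForm := A.impl .falsum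
def TForm.and (A B : TForm) : TForm := (A.impl B.neg).neg
def TForm.or (A B : TForm) : TForm := (A.neg).impl B
def TForm.iff (A B : TForm) : TForm := (A.impl B).and (B.impl A)
def TForm.ex (x : ℕ) (A : TForm) : TForm := (TForm.all x A.neg).neg
def TForm.diaF (A : TForm) : TForm := A.neg.boxF.neg
def TForm.diaP (A : TForm) : TForm := A.neg.boxP.neg

def TForm.freeVars : TForm → Finset ℕ
  | .falsum => ∅
  | .atom _ args => args.toFinset
  | .impl A B => A.freeVars ∪ B.freeVars
  | .all x A => A.freeVars.erase x
  | .boxF A => A.freeVars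
  | .boxP A => A.freeVars

/-- Replace every free occurrence of the variable `x` by `y`. -/
def TForm.subst (x y : ℕ) : TForm → TForm
  | .falsum => .falsum
  | .atom p args => .atom p (args.map fun v => if v = x then y else v)
  | .impl A B => .impl (A.subst x y) (B.subst x y)
  | .all z A => if z = x then .all z A else .all z (A.subst x y)
  | .boxF A => .boxF (A.subst x y)
  | .boxP A => .boxP (A.subst x y)

/-- `y` is substitutable for `x`: no free occurrence of `x` lies in the scope of
a quantifier binding `y`. -/
def TForm.substOK (x y : ℕ) : TForm → Prop
  | .falsum => True
  | .atom _ _ => True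
  | .impl A B => A.substOK x y ∧ B.substOK x y
  | .all z A => z = x ∨ ((z = y → x ∉ A.freeVars) ∧ A.substOK x y)
  | .boxF A => A.substOK x y
  | .boxP A => A.substOK x y

/-- Substitution of `L_T`-formulas for the propositional letters of a bimodal
propositional formula. -/
def BForm.tsubst (s : ℕ → TForm) : BForm → TForm
  | .var n => s n
  | .falsum => .falsum
  | .impl A B => .impl (A.tsubst s) (B.tsubst s)
  | .boxF A => .boxF (A.tsubst s)
  | .boxP A => .boxP (A.tsubst s)

/-! ## The predicate tense logic Q∘S4.t -/

inductive QoS4t : TForm → Prop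
  /-- all substitution instances of theorems of S4.t -/
  | s4t (φ : BForm) (s : ℕ → TForm) : S4t φ → QoS4t (φ.tsubst s)
  /-- (UI°)  ∀y(∀x A → A(y/x)) -/
  | ui (x y : ℕ) (A : TForm) (hok : A.substOK x y) :
      QoS4t (.all y ((TForm.all x A).impl (A.subst x y)))
  /-- ∀x(A → B) → (∀x A → ∀x B) -/
  | distrib (x : ℕ) (A B : TForm) :
      QoS4t ((TForm.all x (A.impl B)).impl ((TForm.all x A).impl (TForm.all x B)))
  /-- ∀x∀y A ↔ ∀y∀x A -/
  | comm (x y : ℕ) (A : TForm) :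
      QoS4t ((TForm.all x (TForm.all y A)).iff (TForm.all y (TForm.all x A)))
  /-- A → ∀x A, x not free in A -/
  | vac (x : ℕ) (A : TForm) (h : x ∉ A.freeVars) : QoS4t (A.impl (.all x A))
  /-- (NID)  ∀x A → A, x not free in A -/
  | nid (x : ℕ) (A : TForm) (h : x ∉ A.freeVars) : QoS4t ((TForm.all x A).impl A)
  /-- (CBF_F)  □F ∀x A → ∀x □F A -/
  | cbfF (x : ℕ) (A : TForm) : QoS4t ((TForm.all x A).boxF.impl (TForm.all x A.boxF))
  | mp (A B : TForm) : QoS4t (A.impl B) → QoS4t A → QoS4t B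
  | gen (x : ℕ) (A : TForm) : QoS4t A → QoS4t (.all x A)
  | necF (A : TForm) : QoS4t A → QoS4t A.boxF
  | necP (A : TForm) : QoS4t A → QoS4t A.boxP

/-! ## The language L of intuitionistic predicate logic and IQC -/

inductive IForm : Type
  | falsum : IForm
  | atom : ℕ → List ℕ → IForm
  | and : IForm → IForm → IForm
  | or : IForm → IForm → IForm
  | impl : IForm → IForm → IForm
  | all : ℕ → IForm → IForm
  | ex : ℕ → IForm → IForm

def IForm.freeVars : IForm → Finset ℕ
  | .falsum => ∅
  | .atom _ args => args.toFinset
  | .and A B => A.freeVars ∪ B.freeVars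
  | .or A B => A.freeVars ∪ B.freeVars
  | .impl A B => A.freeVars ∪ B.freeVars
  | .all x A => A.freeVars.erase x
  | .ex x A => A.freeVars.erase x

def IForm.subst (x y : ℕ) : IForm → IForm
  | .falsum => .falsum
  | .atom p args => .atom p (args.map fun v => if v = x then y else v)
  | .and A B => .and (A.subst x y) (B.subst x y)
  | .or A B => .or (A.subst x y) (B.subst x y)
  | .impl A B => .impl (A.subst x y) (B.subst x y)
  | .all z A => if z = x then .all z A else .all z (A.subst x y)
  | .ex z A => if z = x then .ex z A else .ex z (A.subst x y)

def IForm.substOK (x y : ℕ) : IForm → Prop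
  | .falsum => True
  | .atom _ _ => True
  | .and A B => A.substOK x y ∧ B.substOK x y
  | .or A B => A.substOK x y ∧ B.substOK x y
  | .impl A B => A.substOK x y ∧ B.substOK x y
  | .all z A => z = x ∨ ((z = y → x ∉ A.freeVars) ∧ A.substOK x y)
  | .ex z A => z = x ∨ ((z = y → x ∉ A.freeVars) ∧ A.substOK x y)

/-- Substitution of `L`-formulas for the propositional letters of an
intuitionistic propositional formula. -/
def PropForm.isubst (s : ℕ → IForm) : PropForm → IForm
  | .var n => s n
  | .falsum => .falsum
  | .and A B => .and (A.isubst s) (B.isubst s)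
  | .or A B => .or (A.isubst s) (B.isubst s)
  | .impl A B => .impl (A.isubst s) (B.isubst s)

/-- The intuitionistic predicate calculus IQC. -/
inductive IQC : IForm → Prop
  /-- all substitution instances of theorems of IPC -/
  | ipc (φ : PropForm) (s : ℕ → IForm) : IPC φ → IQC (φ.isubst s)
  /-- (UI)  ∀x A → A(y/x) -/
  | ui (x y : ℕ) (A : IForm) (hok : A.substOK x y) :
      IQC ((IForm.all x A).impl (A.subst x y))
  /-- A(y/x) → ∃x A -/
  | exI (x y : ℕ) (A : IForm) (hok : A.substOK x y) :
      IQC ((A.subst x y).impl (IForm.ex x A))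
  /-- ∀x(A → B) → (A → ∀x B), x not free in A -/
  | allImp (x : ℕ) (A B : IForm) (h : x ∉ A.freeVars) :
      IQC ((IForm.all x (A.impl B)).impl (A.impl (IForm.all x B)))
  /-- ∀x(A → B) → (∃x A → B), x not free in B -/
  | exImp (x : ℕ) (A B : IForm) (h : x ∉ B.freeVars) :
      IQC ((IForm.all x (A.impl B)).impl ((IForm.ex x A).impl B))
  | mp (A B : IForm) : IQC (A.impl B) → IQC A → IQC B
  | gen (x : ℕ) (A : IForm) : IQC A → IQC (.all x A)

/-! ## The temporal Gödel translation -/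

def IForm.t : IForm → TForm
  | .falsum => .falsum
  | .atom p args => .boxF (.atom p args)
  | .and A B => TForm.and A.t B.t
  | .or A B => TForm.or A.t B.t
  | .impl A B => .boxF (A.t.impl B.t)
  | .all x A => .boxF (.all x A.t)
  | .ex x A => TForm.diaP (TForm.ex x A.t)

/-- `closure [x₁,…,xₙ] A = ∀x₁ ⋯ ∀xₙ A`. -/
def TForm.closure (xs : List ℕ) (A : TForm) : TForm := xs.foldr TForm.all A

/-! ## Generalized Kripke semantics for Q∘S4.t -/

/-- A Q∘S4.t-frame: a reflexive transitive relation on a nonempty set of worlds,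
a nonempty constant outer domain `U`, and nonempty increasing inner domains. -/
structure TFrame where
  W : Type
  U : Type
  hW : Nonempty W
  hU : Nonempty U
  R : W → W → Prop
  refl : ∀ w, R w w
  trans : ∀ {u v w}, R u v → R v w → R u w
  D : W → Set U
  Dne : ∀ w, (D w).Nonempty
  Dmono : ∀ {w v}, R w v → D w ⊆ D v

/-- A model based on a Q∘S4.t-frame: interprets each predicate symbol at each
world as a relation on the outer domain. -/
structure TModel (F : TFrame) where
  I : F.W → ℕ → List F.U → Prop

/-- Truth of an `L_T`-formula at a world under an assignment. -/
def TModel.truth {F : TFrame} (M : TModel F) : F.W → (ℕ → F.U) → TForm → Prop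
  | _, _, .falsum => False
  | w, σ, .atom p args => M.I w p (args.map σ)
  | w, σ, .impl A B => M.truth w σ A → M.truth w σ B
  | w, σ, .all x A =>
      ∀ τ : ℕ → F.U, (∀ y, y ≠ x → τ y = σ y) → τ x ∈ F.D w → M.truth w τ A
  | w, σ, .boxF A => ∀ v, F.R w v → M.truth v σ A
  | w, σ, .boxP A => ∀ v, F.R v w → M.truth v σ A

/-- Validity of an `L_T`-formula in a Q∘S4.t-frame. -/
def TFrame.valid (F : TFrame) (A : TForm) : Prop :=
  ∀ M : TModel F, ∀ w : F.W, ∀ σ : ℕ → F.U, M.truth w σ A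

/-! ## Kripke semantics for IQC -/

/-- An IQC-frame: a partial order on a nonempty set of worlds with nonempty
increasing domains. -/
structure IFrame where
  W : Type
  α : Type
  hW : Nonempty W
  R : W → W → Prop
  refl : ∀ w, R w w
  trans : ∀ {u v w}, R u v → R v w → R u w
  antisymm : ∀ {u v}, R u v → R v u → u = v
  D : W → Set α
  Dne : ∀ w, (D w).Nonempty
  Dmono : ∀ {w v}, R w v → D w ⊆ D v

/-- An IQC-model: `I w P ⊆ (D w)ⁿ`, increasing along `R`. -/
structure IModel (F : IFrame) where
  I : F.W → ℕ → List F.α → Prop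
  Isub : ∀ w p as, I w p as → ∀ a ∈ as, a ∈ F.D w
  Imono : ∀ {w v} (p : ℕ) (as : List F.α), F.R w v → I w p as → I v p as

/-- Intuitionistic truth of an `L`-formula at a world under an assignment. -/
def IModel.truth {F : IFrame} (M : IModel F) : F.W → (ℕ → F.α) → IForm → Prop
  | _, _, .falsum => False
  | w, σ, .atom p args => M.I w p (args.map σ)
  | w, σ, .and A B => M.truth w σ A ∧ M.truth w σ B
  | w, σ, .or A B => M.truth w σ A ∨ M.truth w σ B
  | w, σ, .impl A B => ∀ v, F.R w v → M.truth v σ A → M.truth v σ B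
  | w, σ, .all x A =>
      ∀ v, F.R w v → ∀ τ : ℕ → F.α, (∀ y, y ≠ x → τ y = σ y) → τ x ∈ F.D v →
        M.truth v τ A
  | w, σ, .ex x A =>
      ∃ τ : ℕ → F.α, (∀ y, y ≠ x → τ y = σ y) ∧ τ x ∈ F.D w ∧ M.truth w τ A

/-! ## The associated Q∘S4.t-model M̄ -/

/-- The Q∘S4.t-frame associated to an IQC-frame: same worlds and relation,
outer domain `U = ⋃ { D_w ∣ w ∈ W }`, same inner domains. -/
def IFrame.bar (F : IFrame) : TFrame where
  W := F.W
  U := {a : F.α // ∃ w, a ∈ F.D w}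
  hW := F.hW
  hU := by
    obtain ⟨w⟩ := F.hW
    obtain ⟨a, ha⟩ := F.Dne w
    exact ⟨⟨a, w, ha⟩⟩
  R := F.R
  refl := F.refl
  trans := F.trans
  D := fun w => {a | a.1 ∈ F.D w}
  Dne := fun w => by
    obtain ⟨a, ha⟩ := F.Dne w
    exact ⟨⟨a, w, ha⟩, ha⟩
  Dmono := fun h _ ha => F.Dmono h ha

/-- The Q∘S4.t-model `M̄` associated to an IQC-model `M`. -/
def IModel.bar {F : IFrame} (M : IModel F) : TModel F.bar where
  I := fun w p as => M.I w p (as.map Subtype.val)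

/-! ### Classical propositional engine -/

namespace Aux

inductive CPC : List BForm → BForm → Prop
  | hyp {Γ A} : A ∈ Γ → CPC Γ A
  | ax1 (Γ) (A B : BForm) : CPC Γ (A.impl (B.impl A))
  | ax2 (Γ) (A B C : BForm) : CPC Γ ((A.impl (B.impl C)).impl ((A.impl B).impl (A.impl C)))
  | ax3 (Γ) (A B : BForm) : CPC Γ (((B.neg).impl (A.neg)).impl (A.impl B))
  | mp {Γ A B} : CPC Γ (A.impl B) → CPC Γ A → CPC Γ B

theorem CPC.weak {Γ Γ' : List BForm} {A} (h : CPC Γ A) (hs : Γ ⊆ Γ') : CPC Γ' A := by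
  induction h with
  | hyp h => exact .hyp (hs h)
  | ax1 A B => exact .ax1 _ A B
  | ax2 A B C => exact .ax2 _ A B C
  | ax3 A B => exact .ax3 _ A B
  | mp h1 h2 ih1 ih2 => exact .mp ih1 ih2

theorem CPC.iid (Γ) (A : BForm) : CPC Γ (A.impl A) :=
  .mp (.mp (.ax2 Γ A (A.impl A) A) (.ax1 Γ A (A.impl A))) (.ax1 Γ A A)

theorem CPC.dt {Γ A B} (h : CPC (A :: Γ) B) : CPC Γ (A.impl B) := by
  induction h with
  | hyp h =>
    rcases List.mem_cons.1 h with h | h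
    · subst h; exact .iid Γ _
    · exact .mp (.ax1 Γ _ A) (.hyp h)
  | ax1 C D => exact .mp (.ax1 _ _ _) (.ax1 _ _ _)
  | ax2 C D E => exact .mp (.ax1 _ _ _) (.ax2 _ _ _ _)
  | ax3 C D => exact .mp (.ax1 _ _ _) (.ax3 _ _ _)
  | mp h1 h2 ih1 ih2 => exact .mp (.mp (.ax2 _ _ _ _) ih1) ih2

theorem CPC.hyp0 {Γ} (A : BForm) : CPC (A :: Γ) A := .hyp List.mem_cons_self
theorem CPC.hyp1 {Γ} (A B : BForm) : CPC (A :: B :: Γ) B := .hyp (by simp)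
theorem CPC.hyp2 {Γ} (A B C : BForm) : CPC (A :: B :: C :: Γ) C := .hyp (by simp)

/-- ex falso -/
theorem CPC.efq (Γ) (B : BForm) : CPC Γ (BForm.falsum.impl B) :=
  .mp (.ax3 Γ _ _) (.mp (.ax1 Γ _ _) (.iid Γ .falsum))

theorem CPC.negImp (Γ) (A B : BForm) : CPC Γ (A.neg.impl (A.impl B)) := by
  apply CPC.dt; apply CPC.dt
  exact .mp (.efq _ B) (.mp (.hyp1 _ _) (.hyp0 _))

theorem CPC.and3 (Γ) (A B : BForm) :
    CPC Γ (A.impl (B.neg.impl ((A.impl B).neg))) := by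
  apply CPC.dt; apply CPC.dt; apply CPC.dt
  exact .mp (.hyp1 _ _) (.mp (.hyp0 _) (.hyp2 _ _ _))

theorem CPC.dni (Γ) (A : BForm) : CPC Γ (A.impl A.neg.neg) := by
  apply CPC.dt; apply CPC.dt
  exact .mp (.hyp0 _) (.hyp1 _ _)

theorem CPC.contrap {Γ} {A B : BForm} (h : CPC Γ (A.impl B)) :
    CPC Γ (B.neg.impl A.neg) := by
  apply CPC.dt; apply CPC.dt
  exact .mp (.hyp1 _ _) (.mp (h.weak (by intro x hx; simp [hx])) (.hyp0 _))

theorem CPC.dne (Γ) (A : BForm) : CPC Γ (A.neg.neg.impl A) :=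
  .mp (.ax3 Γ _ _) (.dni Γ A.neg)

theorem CPC.cases {Γ} {A B : BForm} (h1 : CPC Γ (A.impl B)) (h2 : CPC Γ (A.neg.impl B)) :
    CPC Γ B := by
  have c1 : CPC Γ (B.neg.impl A.neg) := h1.contrap
  have c2 : CPC Γ (B.neg.impl A.neg.neg) := h2.contrap
  have nn : CPC Γ B.neg.neg := .mp (.mp (.ax2 Γ B.neg A.neg .falsum) c2) c1
  exact .mp (.dne Γ B) nn


/-! ### Semantics and Kalmár completeness -/

def beval (v : ℕ → Bool) : BForm → Bool
  | .var n => v n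
  | .falsum => false
  | .impl A B => !(beval v A) || beval v B
  | .boxF A => beval v A
  | .boxP A => beval v A

def varsBelow (n : ℕ) : BForm → Bool
  | .var m => decide (m < n)
  | .falsum => true
  | .impl A B => varsBelow n A && varsBelow n B
  | .boxF A => varsBelow n A
  | .boxP A => varsBelow n A

def boxFree : BForm → Bool
  | .var _ => true
  | .falsum => true
  | .impl A B => boxFree A && boxFree B
  | .boxF _ => false
  | .boxP _ => false

def vals : ℕ → List (ℕ → Bool)
  | 0 => [fun _ => false]
  | n+1 => (vals n).flatMap (fun v => [Function.update v n true, Function.update v n false])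

theorem vals_complete (n : ℕ) (v : ℕ → Bool) :
    ∃ u ∈ vals n, ∀ i < n, u i = v i := by
  induction n with
  | zero => exact ⟨fun _ => false, by simp [vals], by omega⟩
  | succ n ih =>
    obtain ⟨u, hu, hagree⟩ := ih
    refine ⟨Function.update u n (v n), ?_, ?_⟩
    · simp only [vals, List.mem_flatMap]
      refine ⟨u, hu, ?_⟩
      cases h : v n <;> simp [h]
    · intro i hi
      rcases Nat.lt_succ_iff_lt_or_eq.1 hi with hi | rfl
      · rw [Function.update_of_ne (by omega)]; exact hagree i hi
      · rw [Function.update_self]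

theorem beval_congr {n : ℕ} {φ : BForm} (h : varsBelow n φ = true) {u v : ℕ → Bool}
    (hagree : ∀ i < n, u i = v i) : beval u φ = beval v φ := by
  induction φ with
  | var m => exact hagree m (by simpa [varsBelow] using h)
  | falsum => rfl
  | impl A B ihA ihB =>
    simp only [varsBelow, Bool.and_eq_true] at h
    simp [beval, ihA h.1, ihB h.2]
  | boxF A ihA => exact ihA (by simpa [varsBelow] using h)
  | boxP A ihA => exact ihA (by simpa [varsBelow] using h)

def tautCheck (n : ℕ) (φ : BForm) : Bool := (vals n).all (fun v => beval v φ)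

def lit (v : ℕ → Bool) (i : ℕ) : BForm := if v i then .var i else (BForm.var i).neg

theorem kalmar {φ : BForm} (hbf : boxFree φ = true) {n : ℕ} (hv : varsBelow n φ = true)
    (v : ℕ → Bool) :
    CPC ((List.range n).map (lit v)) (if beval v φ then φ else φ.neg) := by
  induction φ with
  | var m =>
    have hm : m < n := by simpa [varsBelow] using hv
    have : lit v m ∈ (List.range n).map (lit v) :=
      List.mem_map.2 ⟨m, List.mem_range.2 hm, rfl⟩
    cases h : v m <;> simp only [beval, h] <;> · have := CPC.hyp this; simpa [lit, h] using this
  | falsum => simpa [beval, BForm.neg] using CPC.iid _ BForm.falsum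
  | impl A B ihA ihB =>
    simp only [boxFree, Bool.and_eq_true] at hbf
    simp only [varsBelow, Bool.and_eq_true] at hv
    have ihA := ihA hbf.1 hv.1
    have ihB := ihB hbf.2 hv.2
    cases hA : beval v A with
    | false =>
      simp only [hA] at ihA
      have : CPC ((List.range n).map (lit v)) (A.impl B) := .mp (.negImp _ A B) ihA
      simpa [beval, hA] using this
    | true =>
      cases hB : beval v B with
      | true =>
        simp only [hB] at ihB
        have : CPC ((List.range n).map (lit v)) (A.impl B) := .mp (.ax1 _ B A) ihB
        simpa [beval, hA, hB] using this
      | false =>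
        simp only [hA] at ihA; simp only [hB] at ihB
        have : CPC ((List.range n).map (lit v)) ((A.impl B).neg) :=
          .mp (.mp (.and3 _ A B) ihA) ihB
        simpa [beval, hA, hB] using this
  | boxF A ih => simp [boxFree] at hbf
  | boxP A ih => simp [boxFree] at hbf

theorem cpc_of_taut {φ : BForm} (hbf : boxFree φ = true) {n : ℕ}
    (hv : varsBelow n φ = true) (ht : tautCheck n φ = true) : CPC [] φ := by
  have heval : ∀ v : ℕ → Bool, beval v φ = true := by
    intro v
    obtain ⟨u, hu, hagree⟩ := vals_complete n v
    have := (List.all_eq_true.1 ht) u hu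
    rw [beval_congr hv (fun i hi => (hagree i hi).symm)]
    simpa using this
  have step : ∀ k, (∀ v : ℕ → Bool, CPC ((List.range (k+1)).map (lit v)) φ) →
      ∀ v : ℕ → Bool, CPC ((List.range k).map (lit v)) φ := by
    intro k h v
    have hsub : ∀ b, ((List.range (k+1)).map (lit (Function.update v k b)))
        ⊆ (lit (Function.update v k b) k) :: (List.range k).map (lit v) := by
      intro b x hx
      rcases List.mem_map.1 hx with ⟨i, hi, rfl⟩
      rcases Nat.lt_succ_iff_lt_or_eq.1 (List.mem_range.1 hi) with hi | rfl
      · refine List.mem_cons.2 (Or.inr (List.mem_map.2 ⟨i, List.mem_range.2 hi, ?_⟩))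
        simp [lit, Function.update_of_ne (by omega : i ≠ k)]
      · exact List.mem_cons_self
    have h1 : CPC ((BForm.var k) :: (List.range k).map (lit v)) φ := by
      have := (h (Function.update v k true)).weak (hsub true)
      simpa [lit, Function.update_self] using this
    have h2 : CPC ((BForm.var k).neg :: (List.range k).map (lit v)) φ := by
      have := (h (Function.update v k false)).weak (hsub false)
      simpa [lit, Function.update_self] using this
    exact CPC.cases h1.dt h2.dt
  have down : ∀ j, ∀ v : ℕ → Bool, CPC ((List.range (n - j)).map (lit v)) φ := by
    intro j
    induction j with
    | zero =>
      intro v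
      have := kalmar hbf hv v
      simpa [heval v] using this
    | succ j ih =>
      rcases le_or_gt n j with hj | hj
      · have : n - (j+1) = n - j := by omega
        rw [this]; exact ih
      · have : n - j = (n - (j+1)) + 1 := by omega
        rw [this] at ih
        exact step _ ih
  have := down n (fun _ => false)
  simpa using this

theorem s4t_of_cpc {φ : BForm} (h : CPC [] φ) : S4t φ := by
  generalize hΓ : ([] : List BForm) = Γ at h
  induction h with
  | hyp h => rw [← hΓ] at h; simp at h
  | ax1 A B => exact .ax1 A B
  | ax2 A B C => exact .ax2 A B C
  | ax3 A B => exact .ax3 A B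
  | mp h1 h2 ih1 ih2 => exact .mp _ _ ih1 ih2

/-- Main tautology interface: any box-free classical tautology, substituted, is in Q∘S4.t. -/
theorem qt (φ : BForm) (n : ℕ) (hbf : boxFree φ = true) (hv : varsBelow n φ = true)
    (ht : tautCheck n φ = true) (s : ℕ → TForm) : QoS4t (φ.tsubst s) :=
  QoS4t.s4t φ s (s4t_of_cpc (cpc_of_taut hbf hv ht))

-- abbreviations for skeletons
def b0 : BForm := .var 0
def b1 : BForm := .var 1
def b2 : BForm := .var 2
def b3 : BForm := .var 3

def sub1 (X : TForm) : ℕ → TForm := fun _ => X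
def sub2 (X Y : TForm) : ℕ → TForm
  | 0 => X
  | _ => Y
def sub3 (X Y Z : TForm) : ℕ → TForm
  | 0 => X
  | 1 => Y
  | _ => Z
def sub4 (X Y Z W : TForm) : ℕ → TForm
  | 0 => X
  | 1 => Y
  | 2 => Z
  | _ => W

-- a test
example (X Y : TForm) : QoS4t (X.impl (Y.impl X)) :=
  qt (b0.impl (b1.impl b0)) 2 (by decide) (by decide) (by decide) (sub2 X Y)

/-! ### Q∘S4.t toolkit -/

lemma mp' {X Y : TForm} (h1 : QoS4t (X.impl Y)) (h2 : QoS4t X) : QoS4t Y :=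
  QoS4t.mp X Y h1 h2

lemma tF_i (X : TForm) : QoS4t (X.boxF.impl X) :=
  QoS4t.s4t (b0.boxF.impl b0) (sub1 X) (S4t.tF _)
lemma kF_i (X Y : TForm) : QoS4t ((X.impl Y).boxF.impl (X.boxF.impl Y.boxF)) :=
  QoS4t.s4t ((b0.impl b1).boxF.impl (b0.boxF.impl b1.boxF)) (sub2 X Y) (S4t.kF _ _)
lemma fourF_i (X : TForm) : QoS4t (X.boxF.impl X.boxF.boxF) :=
  QoS4t.s4t (b0.boxF.impl b0.boxF.boxF) (sub1 X) (S4t.fourF _)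
lemma tP_i (X : TForm) : QoS4t (X.boxP.impl X) :=
  QoS4t.s4t (b0.boxP.impl b0) (sub1 X) (S4t.tP _)
lemma kP_i (X Y : TForm) : QoS4t ((X.impl Y).boxP.impl (X.boxP.impl Y.boxP)) :=
  QoS4t.s4t ((b0.impl b1).boxP.impl (b0.boxP.impl b1.boxP)) (sub2 X Y) (S4t.kP _ _)
lemma fourP_i (X : TForm) : QoS4t (X.boxP.impl X.boxP.boxP) :=
  QoS4t.s4t (b0.boxP.impl b0.boxP.boxP) (sub1 X) (S4t.fourP _)
lemma tense1_i (X : TForm) : QoS4t (X.impl X.diaF.boxP) :=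
  QoS4t.s4t (b0.impl b0.diaF.boxP) (sub1 X) (S4t.tense1 _)
lemma tense2_i (X : TForm) : QoS4t (X.impl X.diaP.boxF) :=
  QoS4t.s4t (b0.impl b0.diaP.boxF) (sub1 X) (S4t.tense2 _)

lemma itrans {X Y Z : TForm} (h1 : QoS4t (X.impl Y)) (h2 : QoS4t (Y.impl Z)) :
    QoS4t (X.impl Z) :=
  mp' (mp' (qt ((b0.impl b1).impl ((b1.impl b2).impl (b0.impl b2))) 3
    (by decide) (by decide) (by decide) (sub3 X Y Z)) h1) h2

lemma contra {X Y : TForm} (h : QoS4t (X.impl Y)) : QoS4t (Y.neg.impl X.neg) :=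
  mp' (qt ((b0.impl b1).impl ((b1.impl .falsum).impl (b0.impl .falsum))) 2
    (by decide) (by decide) (by decide) (sub2 X Y)) h

lemma boxFMono {X Y : TForm} (h : QoS4t (X.impl Y)) : QoS4t (X.boxF.impl Y.boxF) :=
  mp' (kF_i X Y) (QoS4t.necF _ h)
lemma boxPMono {X Y : TForm} (h : QoS4t (X.impl Y)) : QoS4t (X.boxP.impl Y.boxP) :=
  mp' (kP_i X Y) (QoS4t.necP _ h)

lemma diaPIntro (X : TForm) : QoS4t (X.impl X.diaP) :=
  mp' (qt ((b0.impl (b1.impl .falsum)).impl (b1.impl (b0.impl .falsum))) 2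
    (by decide) (by decide) (by decide) (sub2 X.neg.boxP X)) (tP_i X.neg)

lemma diaPdiaP (X : TForm) : QoS4t (X.diaP.diaP.impl X.diaP) := by
  have h4 : QoS4t ((X.neg.boxP).impl (X.neg.boxP).boxP) := fourP_i X.neg
  have hd : QoS4t ((X.neg.boxP).boxP.impl ((X.neg.boxP).neg.neg).boxP) :=
    boxPMono (qt (b0.impl ((b0.impl .falsum).impl .falsum)) 1
      (by decide) (by decide) (by decide) (sub1 X.neg.boxP))
  exact contra (itrans h4 hd)

lemma diaPStable (X : TForm) : QoS4t (X.diaP.impl X.diaP.boxF) :=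
  itrans (tense2_i X.diaP) (boxFMono (diaPdiaP X))

lemma allMono (x : ℕ) {X Y : TForm} (h : QoS4t (X.impl Y)) :
    QoS4t ((TForm.all x X).impl (TForm.all x Y)) :=
  mp' (QoS4t.distrib x X Y) (QoS4t.gen x _ h)

lemma allComm (x y : ℕ) (X : TForm) :
    QoS4t ((TForm.all x (TForm.all y X)).impl (TForm.all y (TForm.all x X))) := by
  have h := QoS4t.comm x y X
  exact mp' (qt (((b0.impl (b1.impl .falsum)).impl .falsum).impl b0) 2
    (by decide) (by decide) (by decide)
    (sub2 ((TForm.all x (TForm.all y X)).impl (TForm.all y (TForm.all x X)))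
      ((TForm.all y (TForm.all x X)).impl (TForm.all x (TForm.all y X))))) h

lemma clOfThm (xs : List ℕ) {X : TForm} (h : QoS4t X) : QoS4t (TForm.closure xs X) := by
  induction xs with
  | nil => exact h
  | cons z xs ih => exact QoS4t.gen z _ ih

lemma clDistrib (xs : List ℕ) (X Y : TForm) :
    QoS4t ((TForm.closure xs (X.impl Y)).impl
      ((TForm.closure xs X).impl (TForm.closure xs Y))) := by
  induction xs with
  | nil =>
    exact qt ((b0.impl b1).impl ((b0.impl b1))) 2 (by decide) (by decide) (by decide)
      (sub2 X Y)
  | cons z xs ih =>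
    exact itrans (allMono z ih) (QoS4t.distrib z _ _)

lemma clMP {xs : List ℕ} {X Y : TForm} (h : QoS4t (TForm.closure xs (X.impl Y)))
    (h2 : QoS4t (TForm.closure xs X)) : QoS4t (TForm.closure xs Y) :=
  mp' (mp' (clDistrib xs X Y) h) h2

lemma clImp (xs : List ℕ) {X Y : TForm} (h : QoS4t (X.impl Y)) :
    QoS4t ((TForm.closure xs X).impl (TForm.closure xs Y)) := by
  induction xs with
  | nil => exact h
  | cons z xs ih => exact allMono z ih

lemma genUnder (y z : ℕ) {X : TForm} (h : QoS4t (TForm.all y X)) :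
    QoS4t (TForm.all y (TForm.all z X)) :=
  mp' (allComm z y X) (QoS4t.gen z _ h)

lemma genUnderCl (y : ℕ) (zs : List ℕ) {X : TForm} (h : QoS4t (TForm.all y X)) :
    QoS4t (TForm.all y (TForm.closure zs X)) := by
  induction zs with
  | nil => exact h
  | cons z zs ih => exact genUnder y z ih

lemma clOfAll {y : ℕ} {xs : List ℕ} (hy : y ∈ xs) {E : TForm}
    (h : QoS4t (TForm.all y E)) : QoS4t (TForm.closure xs E) := by
  induction xs with
  | nil => simp at hy
  | cons z xs ih =>
    rcases List.mem_cons.1 hy with rfl | hy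
    · exact genUnderCl y xs h
    · exact QoS4t.gen z _ (ih hy)

lemma pushBoxCl (xs : List ℕ) (X : TForm) :
    QoS4t ((TForm.closure xs X).boxF.impl (TForm.closure xs X.boxF)) := by
  induction xs with
  | nil => exact qt (b0.impl b0) 1 (by decide) (by decide) (by decide) (sub1 X.boxF)
  | cons z xs ih => exact itrans (QoS4t.cbfF z _) (allMono z ih)

lemma fv_cl_subset (xs : List ℕ) (X : TForm) :
    (TForm.closure xs X).freeVars ⊆ X.freeVars := by
  induction xs with
  | nil => exact Finset.Subset.refl _
  | cons z xs ih =>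
    exact (Finset.erase_subset _ _).trans ih

lemma stripCl (ys : List ℕ) {C : TForm} (hfv : C.freeVars = ∅)
    (h : QoS4t (TForm.closure ys C)) : QoS4t C := by
  induction ys with
  | nil => exact h
  | cons y ys ih =>
    refine ih (mp' (QoS4t.nid y _ ?_) h)
    intro hmem
    have := fv_cl_subset ys C hmem
    simp [hfv] at this

/-! ### Free variables and substitution -/

lemma tfv_neg (X : TForm) : X.neg.freeVars = X.freeVars := by
  simp [TForm.neg, TForm.freeVars]

lemma tfv_and (X Y : TForm) : (TForm.and X Y).freeVars = X.freeVars ∪ Y.freeVars := by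
  simp [TForm.and, TForm.neg, TForm.freeVars]

lemma tfv_or (X Y : TForm) : (TForm.or X Y).freeVars = X.freeVars ∪ Y.freeVars := by
  simp [TForm.or, TForm.neg, TForm.freeVars]

lemma tfv_ex (x : ℕ) (X : TForm) : (TForm.ex x X).freeVars = X.freeVars.erase x := by
  simp [TForm.ex, TForm.neg, TForm.freeVars]

lemma tfv_diaP (X : TForm) : X.diaP.freeVars = X.freeVars := by
  simp [TForm.diaP, TForm.neg, TForm.freeVars]

lemma tfv_diaF (X : TForm) : X.diaF.freeVars = X.freeVars := by
  simp [TForm.diaF, TForm.neg, TForm.freeVars]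

lemma fv_t (A : IForm) : (A.t).freeVars = A.freeVars := by
  induction A with
  | falsum => rfl
  | atom p args => simp [IForm.t, TForm.freeVars, IForm.freeVars]
  | and A B ihA ihB => simp [IForm.t, tfv_and, ihA, ihB, IForm.freeVars]
  | or A B ihA ihB => simp [IForm.t, tfv_or, ihA, ihB, IForm.freeVars]
  | impl A B ihA ihB => simp [IForm.t, TForm.freeVars, ihA, ihB, IForm.freeVars]
  | all x A ih => simp [IForm.t, TForm.freeVars, ih, IForm.freeVars]
  | ex x A ih => simp [IForm.t, tfv_diaP, tfv_ex, ih, IForm.freeVars]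

lemma subst_t (x y : ℕ) (A : IForm) : (A.subst x y).t = A.t.subst x y := by
  induction A with
  | falsum => rfl
  | atom p args => simp [IForm.subst, IForm.t, TForm.subst]
  | and A B ihA ihB =>
    simp [IForm.subst, IForm.t, TForm.and, TForm.neg, TForm.subst, ihA, ihB]
  | or A B ihA ihB =>
    simp [IForm.subst, IForm.t, TForm.or, TForm.neg, TForm.subst, ihA, ihB]
  | impl A B ihA ihB => simp [IForm.subst, IForm.t, TForm.subst, ihA, ihB]
  | all z A ih =>
    by_cases hz : z = x <;>
      simp [IForm.subst, IForm.t, TForm.subst, hz, ih]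
  | ex z A ih =>
    by_cases hz : z = x <;>
      simp [IForm.subst, IForm.t, TForm.ex, TForm.diaP, TForm.neg, TForm.subst, hz, ih]

lemma substOK_t {x y : ℕ} {A : IForm} (h : A.substOK x y) : TForm.substOK x y A.t := by
  induction A with
  | falsum => trivial
  | atom p args => trivial
  | and A B ihA ihB =>
    obtain ⟨h1, h2⟩ := h
    simp [IForm.t, TForm.and, TForm.neg, TForm.substOK, ihA h1, ihB h2]
  | or A B ihA ihB =>
    obtain ⟨h1, h2⟩ := h
    simp [IForm.t, TForm.or, TForm.neg, TForm.substOK, ihA h1, ihB h2]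
  | impl A B ihA ihB =>
    obtain ⟨h1, h2⟩ := h
    simp [IForm.t, TForm.substOK, ihA h1, ihB h2]
  | all z A ih =>
    simp only [IForm.t, TForm.substOK]
    rcases h with h | ⟨h1, h2⟩
    · exact Or.inl h
    · exact Or.inr ⟨fun hzy => by rw [fv_t]; exact h1 hzy, ih h2⟩
  | ex z A ih =>
    simp only [IForm.t, TForm.ex, TForm.diaP, TForm.neg, TForm.substOK]
    rcases h with h | ⟨h1, h2⟩
    · exact ⟨⟨⟨Or.inl h, trivial⟩, trivial⟩, trivial⟩
    · refine ⟨⟨⟨Or.inr ⟨fun hzy hmem => ?_, ih h2, trivial⟩, trivial⟩, trivial⟩, trivial⟩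
      rw [show A.t.impl TForm.falsum = A.t.neg from rfl, tfv_neg, fv_t] at hmem
      exact h1 hzy hmem

lemma tsubstOK_self (x : ℕ) (D : TForm) : TForm.substOK x x D := by
  induction D with
  | falsum => trivial
  | atom p args => trivial
  | impl A B ihA ihB => exact ⟨ihA, ihB⟩
  | all z A ih =>
    by_cases hz : z = x
    · exact Or.inl hz
    · exact Or.inr ⟨fun hzy => absurd hzy hz, ih⟩
  | boxF A ih => exact ih
  | boxP A ih => exact ih

lemma tsubst_self (x : ℕ) (D : TForm) : D.subst x x = D := by
  induction D with
  | falsum => rfl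
  | atom p args =>
    simp only [TForm.subst, TForm.atom.injEq, true_and]
    have : ∀ v ∈ args, (if v = x then x else v) = v := by
      intro v _; split <;> simp_all
    rw [List.map_congr_left this]; simp
  | impl A B ihA ihB => simp [TForm.subst, ihA, ihB]
  | all z A ih => by_cases hz : z = x <;> simp [TForm.subst, hz, ih]
  | boxF A ih => simp [TForm.subst, ih]
  | boxP A ih => simp [TForm.subst, ih]

lemma isubst_not_free {x : ℕ} (y : ℕ) {A : IForm} (h : x ∉ A.freeVars) :
    A.subst x y = A := by
  induction A with
  | falsum => rfl
  | atom p args =>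
    simp only [IForm.freeVars, List.mem_toFinset] at h
    simp only [IForm.subst, IForm.atom.injEq, true_and]
    have : ∀ v ∈ args, (if v = x then y else v) = v := by
      intro v hv
      have : v ≠ x := fun hvx => h (hvx ▸ hv)
      simp [this]
    rw [List.map_congr_left this]; simp
  | and A B ihA ihB =>
    simp only [IForm.freeVars, Finset.mem_union] at h
    push_neg at h
    simp [IForm.subst, ihA h.1, ihB h.2]
  | or A B ihA ihB =>
    simp only [IForm.freeVars, Finset.mem_union] at h
    push_neg at h
    simp [IForm.subst, ihA h.1, ihB h.2]
  | impl A B ihA ihB =>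
    simp only [IForm.freeVars, Finset.mem_union] at h
    push_neg at h
    simp [IForm.subst, ihA h.1, ihB h.2]
  | all z A ih =>
    by_cases hz : z = x
    · simp [IForm.subst, hz]
    · simp only [IForm.freeVars] at h
      have hx : x ∉ A.freeVars := by
        intro hx
        exact h (Finset.mem_erase.2 ⟨fun hxz => hz (hxz.symm), hx⟩)
      simp [IForm.subst, hz, ih hx]
  | ex z A ih =>
    by_cases hz : z = x
    · simp [IForm.subst, hz]
    · simp only [IForm.freeVars] at h
      have hx : x ∉ A.freeVars := by
        intro hx
        exact h (Finset.mem_erase.2 ⟨fun hxz => hz (hxz.symm), hx⟩)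
      simp [IForm.subst, hz, ih hx]

lemma mem_fv_subst {x y : ℕ} {A : IForm} (hok : A.substOK x y) (hx : x ∈ A.freeVars) :
    y ∈ (A.subst x y).freeVars := by
  induction A with
  | falsum => simp [IForm.freeVars] at hx
  | atom p args =>
    simp only [IForm.subst, IForm.freeVars, List.mem_toFinset] at hx ⊢
    exact List.mem_map.2 ⟨x, hx, by simp⟩
  | and A B ihA ihB =>
    simp only [IForm.subst, IForm.freeVars, Finset.mem_union] at hx ⊢
    rcases hx with hx | hx
    · exact Or.inl (ihA hok.1 hx)
    · exact Or.inr (ihB hok.2 hx)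
  | or A B ihA ihB =>
    simp only [IForm.subst, IForm.freeVars, Finset.mem_union] at hx ⊢
    rcases hx with hx | hx
    · exact Or.inl (ihA hok.1 hx)
    · exact Or.inr (ihB hok.2 hx)
  | impl A B ihA ihB =>
    simp only [IForm.subst, IForm.freeVars, Finset.mem_union] at hx ⊢
    rcases hx with hx | hx
    · exact Or.inl (ihA hok.1 hx)
    · exact Or.inr (ihB hok.2 hx)
  | all z A ih =>
    simp only [IForm.freeVars, Finset.mem_erase] at hx
    obtain ⟨hxz, hx⟩ := hx
    rcases hok with h | ⟨h1, h2⟩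
    · exact absurd h.symm hxz
    · have hzy : z ≠ y := fun hzy => (h1 hzy) hx
      have hzx : ¬ (z = x) := fun hzx => hxz hzx.symm
      simp only [IForm.subst, hzx, if_false, IForm.freeVars, Finset.mem_erase]
      exact ⟨fun hyz => hzy hyz.symm, ih h2 hx⟩
  | ex z A ih =>
    simp only [IForm.freeVars, Finset.mem_erase] at hx
    obtain ⟨hxz, hx⟩ := hx
    rcases hok with h | ⟨h1, h2⟩
    · exact absurd h.symm hxz
    · have hzy : z ≠ y := fun hzy => (h1 hzy) hx
      have hzx : ¬ (z = x) := fun hzx => hxz hzx.symm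
      simp only [IForm.subst, hzx, if_false, IForm.freeVars, Finset.mem_erase]
      exact ⟨fun hyz => hzy hyz.symm, ih h2 hx⟩

/-! ### Self-boxing of translated formulas, and IPC -/

lemma impMonoR {P Q R : TForm} (h : QoS4t (Q.impl R)) : QoS4t ((P.impl Q).impl (P.impl R)) :=
  mp' (qt ((b1.impl b2).impl ((b0.impl b1).impl (b0.impl b2))) 3
    (by decide) (by decide) (by decide) (sub3 P Q R)) h

lemma impMonoL {P Q R : TForm} (h : QoS4t (P.impl Q)) : QoS4t ((Q.impl R).impl (P.impl R)) :=
  mp' (qt ((b0.impl b1).impl ((b1.impl b2).impl (b0.impl b2))) 3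
    (by decide) (by decide) (by decide) (sub3 P Q R)) h

lemma andProj1 (X Y : TForm) : QoS4t ((TForm.and X Y).impl X) :=
  qt (((b0.impl (b1.impl .falsum)).impl .falsum).impl b0) 2
    (by decide) (by decide) (by decide) (sub2 X Y)

lemma andProj2 (X Y : TForm) : QoS4t ((TForm.and X Y).impl Y) :=
  qt (((b0.impl (b1.impl .falsum)).impl .falsum).impl b1) 2
    (by decide) (by decide) (by decide) (sub2 X Y)

lemma andIntro3 (X Y : TForm) : QoS4t (X.impl (Y.impl (TForm.and X Y))) :=
  qt (b0.impl (b1.impl ((b0.impl (b1.impl .falsum)).impl .falsum))) 2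
    (by decide) (by decide) (by decide) (sub2 X Y)

lemma selfBox (A : IForm) : QoS4t (A.t.impl A.t.boxF) := by
  induction A with
  | falsum =>
    exact qt (BForm.falsum.impl b0) 1 (by decide) (by decide) (by decide)
      (sub1 TForm.falsum.boxF)
  | atom p args => exact fourF_i _
  | impl A B ihA ihB => exact fourF_i _
  | all x A ih => exact fourF_i _
  | ex x A ih => exact diaPStable _
  | and A B ihA ihB =>
    set a := A.t
    set b := B.t
    have pa : QoS4t ((TForm.and a b).impl a.boxF) := itrans (andProj1 a b) ihA
    have pb : QoS4t ((TForm.and a b).impl b.boxF) := itrans (andProj2 a b) ihB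
    have s4 : QoS4t (a.boxF.impl (b.boxF.impl (TForm.and a b).boxF)) :=
      itrans (boxFMono (andIntro3 a b)) (kF_i _ _)
    have final := qt ((b0.impl b1).impl ((b0.impl b2).impl
        ((b1.impl (b2.impl b3)).impl (b0.impl b3)))) 4
      (by decide) (by decide) (by decide)
      (sub4 (TForm.and a b) a.boxF b.boxF (TForm.and a b).boxF)
    exact mp' (mp' (mp' final pa) pb) s4
  | or A B ihA ihB =>
    set a := A.t
    set b := B.t
    have c1 : QoS4t (a.impl (TForm.or a b)) :=
      qt (b0.impl ((b0.impl .falsum).impl b1)) 2 (by decide) (by decide) (by decide)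
        (sub2 a b)
    have c2 : QoS4t (b.impl (TForm.or a b)) :=
      qt (b1.impl ((b0.impl .falsum).impl b1)) 2 (by decide) (by decide) (by decide)
        (sub2 a b)
    have pa : QoS4t (a.impl (TForm.or a b).boxF) := itrans ihA (boxFMono c1)
    have pb : QoS4t (b.impl (TForm.or a b).boxF) := itrans ihB (boxFMono c2)
    have final := qt ((b0.impl b2).impl ((b1.impl b2).impl
        (((b0.impl .falsum).impl b1).impl b2))) 3
      (by decide) (by decide) (by decide) (sub3 a b (TForm.or a b).boxF)
    exact mp' (mp' final pa) pb

lemma ipc_t {φ : PropForm} (h : IPC φ) (s : ℕ → IForm) : QoS4t ((φ.isubst s).t) := by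
  induction h with
  | ax1 A B =>
    refine QoS4t.necF _ (itrans (selfBox (A.isubst s)) (boxFMono ?_))
    exact qt (b0.impl (b1.impl b0)) 2 (by decide) (by decide) (by decide)
      (sub2 (A.isubst s).t (B.isubst s).t)
  | ax2 A B C =>
    set a := (A.isubst s).t
    set b := (B.isubst s).t
    set c := (C.isubst s).t
    have s1 : QoS4t ((a.impl (b.impl c).boxF).boxF.impl (a.impl (b.impl c)).boxF) :=
      boxFMono (impMonoR (tF_i _))
    have s3 : QoS4t ((a.impl (b.impl c)).impl ((a.impl b).impl (a.impl c))) :=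
      qt ((b0.impl (b1.impl b2)).impl ((b0.impl b1).impl (b0.impl b2))) 3
        (by decide) (by decide) (by decide) (sub3 a b c)
    have s4 : QoS4t ((a.impl (b.impl c)).boxF.impl
        ((a.impl b).boxF.impl (a.impl c).boxF)) :=
      itrans (boxFMono s3) (kF_i _ _)
    exact QoS4t.necF _ (itrans s1 (itrans (fourF_i _) (boxFMono s4)))
  | andE1 A B => exact QoS4t.necF _ (andProj1 _ _)
  | andE2 A B => exact QoS4t.necF _ (andProj2 _ _)
  | andI A B =>
    exact QoS4t.necF _ (itrans (selfBox (A.isubst s)) (boxFMono (andIntro3 _ _)))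
  | orI1 A B =>
    refine QoS4t.necF _ ?_
    exact qt (b0.impl ((b0.impl .falsum).impl b1)) 2 (by decide) (by decide) (by decide)
      (sub2 (A.isubst s).t (B.isubst s).t)
  | orI2 A B =>
    refine QoS4t.necF _ ?_
    exact qt (b1.impl ((b0.impl .falsum).impl b1)) 2 (by decide) (by decide) (by decide)
      (sub2 (A.isubst s).t (B.isubst s).t)
  | orE A B C =>
    set a := (A.isubst s).t
    set b := (B.isubst s).t
    set c := (C.isubst s).t
    have u1 : QoS4t ((a.impl c).impl ((b.impl c).impl ((TForm.or a b).impl c))) :=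
      qt ((b0.impl b2).impl ((b1.impl b2).impl (((b0.impl .falsum).impl b1).impl b2))) 3
        (by decide) (by decide) (by decide) (sub3 a b c)
    have u2 : QoS4t ((a.impl c).boxF.impl
        ((b.impl c).boxF.impl ((TForm.or a b).impl c).boxF)) :=
      itrans (boxFMono u1) (kF_i _ _)
    exact QoS4t.necF _ (itrans (fourF_i _) (boxFMono u2))
  | exfalso A =>
    refine QoS4t.necF _ ?_
    exact qt (BForm.falsum.impl b0) 1 (by decide) (by decide) (by decide)
      (sub1 (A.isubst s).t)
  | mp A B h1 h2 ih1 ih2 =>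
    exact mp' (mp' (tF_i _) ih1) ih2

/-! ### Quantifier axioms and the main induction -/

lemma kImp {P Q : TForm} (sb : QoS4t (P.impl P.boxF)) :
    QoS4t ((P.impl Q).boxF.impl (P.impl Q.boxF)) :=
  mp' (mp' (qt ((b0.impl (b1.impl b2)).impl ((b3.impl b1).impl (b0.impl (b3.impl b2)))) 4
    (by decide) (by decide) (by decide) (sub4 (P.impl Q).boxF P.boxF Q.boxF P))
    (kF_i P Q)) sb

lemma combine4 {G P Q R : TForm} (h1 : QoS4t (G.impl (P.impl Q)))
    (h2 : QoS4t (R.impl P)) : QoS4t (G.impl (R.impl Q)) :=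
  mp' (mp' (qt ((b0.impl (b1.impl b2)).impl ((b3.impl b1).impl (b0.impl (b3.impl b2)))) 4
    (by decide) (by decide) (by decide) (sub4 G P Q R)) h1) h2

lemma fv_cl (xs : List ℕ) (X : TForm) :
    (TForm.closure xs X).freeVars = X.freeVars \ xs.toFinset := by
  induction xs with
  | nil => simp [TForm.closure]
  | cons z xs ih =>
    show ((TForm.closure xs X).freeVars).erase z = _
    rw [ih]
    ext v
    simp only [Finset.mem_erase, Finset.mem_sdiff, List.toFinset_cons, Finset.mem_insert]
    tauto

lemma cl_append (ys xs : List ℕ) (X : TForm) :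
    TForm.closure (ys ++ xs) X = TForm.closure ys (TForm.closure xs X) := by
  simp [TForm.closure, List.foldr_append]

theorem main {A : IForm} (h : IQC A) :
    ∀ xs : List ℕ, A.freeVars ⊆ xs.toFinset → QoS4t (TForm.closure xs A.t) := by
  induction h with
  | ipc φ s hφ =>
    intro xs _
    exact clOfThm xs (ipc_t hφ s)
  | ui x y A hok =>
    intro xs hxs
    simp only [IForm.t, subst_t]
    set a := A.t with ha
    by_cases hx : x ∈ A.freeVars
    · have hy : y ∈ xs := by
        have : y ∈ ((IForm.all x A).impl (A.subst x y)).freeVars := by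
          simp only [IForm.freeVars, Finset.mem_union]
          exact Or.inr (mem_fv_subst hok hx)
        exact List.mem_toFinset.1 (hxs this)
      have u1 : QoS4t (TForm.all y ((TForm.all x a).impl (a.subst x y))) :=
        QoS4t.ui x y a (substOK_t hok)
      have t2 : QoS4t (((TForm.all x a).impl (a.subst x y)).impl
          ((TForm.all x a).boxF.impl (a.subst x y))) := impMonoL (tF_i _)
      have u3 : QoS4t (TForm.all y ((TForm.all x a).boxF.impl (a.subst x y))) :=
        mp' (allMono y t2) u1
      have u5 : QoS4t (TForm.all y (((TForm.all x a).boxF.impl (a.subst x y)).boxF)) :=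
        mp' (QoS4t.cbfF y _) (QoS4t.necF _ u3)
      exact clOfAll hy u5
    · rw [ha, ← subst_t, show A.subst x y = A from isubst_not_free y hx, ← ha]
      have n1 : QoS4t ((TForm.all x a).impl a) :=
        QoS4t.nid x a (by rw [ha, fv_t]; exact hx)
      exact clOfThm xs (QoS4t.necF _ (itrans (tF_i _) n1))
  | exI x y A hok =>
    intro xs hxs
    simp only [IForm.t, subst_t]
    set a := A.t with ha
    by_cases hx : x ∈ A.freeVars
    · have hy : y ∈ xs := by
        have : y ∈ ((A.subst x y).impl (IForm.ex x A)).freeVars := by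
          simp only [IForm.freeVars, Finset.mem_union]
          exact Or.inl (mem_fv_subst hok hx)
        exact List.mem_toFinset.1 (hxs this)
      have e1 : QoS4t (TForm.all y ((TForm.all x a.neg).impl ((a.subst x y).neg))) :=
        QoS4t.ui x y a.neg ⟨substOK_t hok, trivial⟩
      have e2b : QoS4t (((TForm.all x a.neg).impl (a.subst x y).neg).impl
          ((a.subst x y).impl (TForm.ex x a))) :=
        qt ((b0.impl (b1.impl .falsum)).impl (b1.impl (b0.impl .falsum))) 2
          (by decide) (by decide) (by decide) (sub2 (TForm.all x a.neg) (a.subst x y))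
      have e2 : QoS4t (TForm.all y ((a.subst x y).impl (TForm.ex x a))) :=
        mp' (allMono y e2b) e1
      have e3 : QoS4t (TForm.all y ((a.subst x y).impl (TForm.ex x a).diaP)) :=
        mp' (allMono y (impMonoR (diaPIntro _))) e2
      have e4 : QoS4t (TForm.all y (((a.subst x y).impl (TForm.ex x a).diaP).boxF)) :=
        mp' (QoS4t.cbfF y _) (QoS4t.necF _ e3)
      exact clOfAll hy e4
    · rw [ha, ← subst_t, show A.subst x y = A from isubst_not_free y hx, ← ha]
      have n1 : QoS4t ((TForm.all x a.neg).impl a.neg) :=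
        QoS4t.nid x a.neg (by rw [tfv_neg, ha, fv_t]; exact hx)
      have n2 : QoS4t (a.impl (TForm.ex x a)) :=
        mp' (qt ((b0.impl (b1.impl .falsum)).impl (b1.impl (b0.impl .falsum))) 2
          (by decide) (by decide) (by decide) (sub2 (TForm.all x a.neg) a)) n1
      exact clOfThm xs (QoS4t.necF _ (itrans n2 (diaPIntro _)))
  | allImp x A B h =>
    intro xs _
    simp only [IForm.t]
    set a := A.t with ha
    set b := B.t with hb
    set G := TForm.all x ((a.impl b).boxF) with hG
    have i1 : QoS4t (G.impl (TForm.all x (a.impl b))) := allMono x (tF_i _)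
    have i12 : QoS4t (G.impl ((TForm.all x a).impl (TForm.all x b))) :=
      itrans i1 (QoS4t.distrib x a b)
    have i3 : QoS4t (a.impl (TForm.all x a)) := QoS4t.vac x a (by rw [ha, fv_t]; exact h)
    have i4 : QoS4t (G.impl (a.impl (TForm.all x b))) := combine4 i12 i3
    have i5 : QoS4t (G.boxF.impl (a.boxF.impl (TForm.all x b).boxF)) :=
      itrans (boxFMono i4) (kF_i _ _)
    have i6 : QoS4t (G.boxF.impl (a.impl (TForm.all x b).boxF)) :=
      combine4 i5 (selfBox A)
    have i7 : QoS4t (G.boxF.impl ((a.impl (TForm.all x b).boxF).boxF)) :=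
      itrans (fourF_i _) (boxFMono i6)
    exact clOfThm xs (QoS4t.necF _ i7)
  | exImp x A B h =>
    intro xs _
    simp only [IForm.t]
    set a := A.t with ha
    set b := B.t with hb
    set C := (a.impl b).boxF with hC
    set G := TForm.all x C with hG
    set Ex := TForm.ex x a with hEx
    set Dia := Ex.diaP with hDia
    set X := TForm.and G b.neg with hX
    have s1 : QoS4t (TForm.all x ((TForm.all x C).impl C)) := by
      have := QoS4t.ui x x C (tsubstOK_self x C)
      rwa [tsubst_self] at this
    have s2 : QoS4t (TForm.all x (G.impl (a.impl b))) :=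
      mp' (allMono x (impMonoR (tF_i _))) s1
    have s3b : QoS4t ((G.impl (a.impl b)).impl (a.impl X.neg)) :=
      qt ((b0.impl (b1.impl b2)).impl (b1.impl
          ((((b0.impl ((b2.impl .falsum).impl .falsum))).impl .falsum).impl .falsum))) 3
        (by decide) (by decide) (by decide) (sub3 G a b)
    have s3 : QoS4t (TForm.all x (a.impl X.neg)) := mp' (allMono x s3b) s2
    have s4 : QoS4t (TForm.all x ((a.impl X.neg).boxF)) :=
      mp' (QoS4t.cbfF x _) (QoS4t.necF _ s3)
    have s5 : QoS4t (TForm.all x (a.impl X.neg.boxF)) :=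
      mp' (allMono x (kImp (selfBox A))) s4
    have s6b : QoS4t ((a.impl X.neg.boxF).impl (X.diaF.impl a.neg)) :=
      qt ((b0.impl b1).impl ((b1.impl .falsum).impl (b0.impl .falsum))) 2
        (by decide) (by decide) (by decide) (sub2 a X.neg.boxF)
    have s6 : QoS4t (TForm.all x (X.diaF.impl a.neg)) := mp' (allMono x s6b) s5
    have hfvd : x ∉ (X.diaF).freeVars := by
      rw [tfv_diaF, hX, tfv_and, tfv_neg, hb, fv_t]
      simp only [Finset.mem_union, hG, TForm.freeVars]
      rintro (h1 | h1)
      · exact absurd (Finset.mem_erase.1 h1).1 (by simp)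
      · exact h h1
    have s7 : QoS4t (X.diaF.impl (TForm.all x a.neg)) :=
      itrans (QoS4t.vac x _ hfvd) (mp' (QoS4t.distrib x _ _) s6)
    have s9 : QoS4t (X.impl (TForm.all x a.neg).boxP) :=
      itrans (tense1_i X) (boxPMono s7)
    have dniAll : QoS4t ((TForm.all x a.neg).impl Ex.neg) :=
      qt (b0.impl ((b0.impl .falsum).impl .falsum)) 1
        (by decide) (by decide) (by decide) (sub1 (TForm.all x a.neg))
    have dniBox : QoS4t ((Ex.neg.boxP).impl Dia.neg) :=
      qt (b0.impl ((b0.impl .falsum).impl .falsum)) 1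
        (by decide) (by decide) (by decide) (sub1 Ex.neg.boxP)
    have s11 : QoS4t (X.impl Dia.neg) :=
      itrans s9 (itrans (boxPMono dniAll) dniBox)
    have s12 : QoS4t (G.impl (Dia.impl b)) :=
      mp' (qt ((((b0.impl ((b1.impl .falsum).impl .falsum)).impl .falsum).impl
          (b2.impl .falsum)).impl (b0.impl (b2.impl b1))) 3
        (by decide) (by decide) (by decide) (sub3 G b Dia)) s11
    have s14 : QoS4t (G.boxF.impl ((Dia.impl b).boxF)) :=
      itrans (fourF_i G) (boxFMono (itrans (tF_i G) s12))
    exact clOfThm xs (QoS4t.necF _ s14)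
  | mp A B h1 h2 ih1 ih2 =>
    intro xs hxs
    classical
    set ds := (A.freeVars \ xs.toFinset).toList with hds
    set zs := ds ++ xs with hzs
    have hcov : (A.impl B).freeVars ⊆ zs.toFinset := by
      intro v hv
      simp only [hzs, List.toFinset_append, Finset.mem_union, hds, Finset.toList_toFinset]
      simp only [IForm.freeVars, Finset.mem_union] at hv
      rcases hv with hv | hv
      · by_cases hvx : v ∈ xs.toFinset
        · exact Or.inr hvx
        · exact Or.inl (Finset.mem_sdiff.2 ⟨hv, hvx⟩)
      · exact Or.inr (hxs hv)
    have hcovA : A.freeVars ⊆ zs.toFinset := by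
      intro v hv
      exact hcov (by simp only [IForm.freeVars, Finset.mem_union]; exact Or.inl hv)
    have H1 := ih1 zs hcov
    have H2 := ih2 zs hcovA
    have H1' : QoS4t (TForm.closure zs (A.t.impl B.t)) :=
      mp' (clImp zs (tF_i (A.t.impl B.t))) H1
    have H3 : QoS4t (TForm.closure zs B.t) := clMP H1' H2
    rw [hzs, cl_append] at H3
    refine stripCl ds ?_ H3
    rw [fv_cl, fv_t]
    exact Finset.sdiff_eq_empty_iff_subset.2 (fun v hv =>
      hxs (by simpa [IForm.freeVars] using hv))
  | gen x A h1 ih =>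
    intro xs hxs
    have hcov : A.freeVars ⊆ (xs ++ [x]).toFinset := by
      intro v hv
      simp only [List.toFinset_append, Finset.mem_union, List.toFinset_cons,
        List.toFinset_nil, insert_empty_eq, Finset.mem_insert, Finset.mem_singleton]
      by_cases hvx : v = x
      · exact Or.inr (by simp [hvx])
      · exact Or.inl (hxs (by
          simp only [IForm.freeVars, Finset.mem_erase]
          exact ⟨hvx, hv⟩))
    have H := ih (xs ++ [x]) hcov
    rw [cl_append] at H
    exact mp' (pushBoxCl xs (TForm.all x A.t)) (QoS4t.necF _ H)


end Aux

/-- **Faithfulness.** If `A` is provable in IQC, then `∀x₁ ⋯ ∀xₙ A^t` is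
provable in Q∘S4.t, where `x₁, …, xₙ` are the free variables of `A`. -/
theorem faithfulness_of_temporal_translation
    (A : IForm) (xs : List ℕ) (hnd : xs.Nodup) (hfv : xs.toFinset = A.freeVars)
    (h : IQC A) :
    QoS4t (TForm.closure xs A.t) := by
  exact Aux.main h xs (le_of_eq hfv.symm)
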